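/- arXiv:2506.14123 — 2 statements merged into one kernel-verified Lean document; each statement's English description precedes it below -/
import Mathlib

section
/- Let S₁ and S₂ be byte strings. If some merge applied during the run of encode on S₁ ⧺ S₂ crosses position |S₁|, then the final token sequence encode(S₁ ⧺ S₂) contains a token that crosses position |S₁|; in particular, encode(S₁ ⧺ S₂) ≠ encode(S₁) ⧺ encode(S₂). -/
/-!
Formalization of a BPE tokenizer with an ordered merge list.

* `σ` is the (finite) byte alphabet, `τ` is the (finite) vocabulary of tokens.
* `base` embeds each byte as a distinct base token.
* `dec` decodes a single token to a byte string; it is extended to token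
  sequences by concatenation (`decodeSeq`).
* `merges` is the ordered merge list; each merge `(l, r, n)` replaces an
  adjacent pair `(l, r)` by the single token `n`, and satisfies
  `dec n = dec l ++ dec r`.
* `encode` turns a byte string into its base tokens and then, processing the
  merges in order, repeatedly replaces the leftmost adjacent occurrence of
  `(l, r)` by `n` until no occurrence remains, before moving to the next merge.
-/

structure BPE (σ τ : Type*) where
  base : σ → τ
  dec : τ → List σ
  merges : List (τ × τ × τ)
  base_inj : Function.Injective base
  dec_base : ∀ b, dec (base b) = [b]
  dec_merge : ∀ m ∈ merges, dec m.2.2 = dec m.1 ++ dec m.2.1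

namespace BPE

variable {σ τ : Type*} [DecidableEq τ]

/-- Decode a token sequence by concatenating the decodings of its tokens. -/
def decodeSeq (B : BPE σ τ) (T : List τ) : List σ := (T.map B.dec).flatten

/-- Replace the leftmost adjacent occurrence of `(l, r)` by `n`, if any,
also returning the starting byte position of the replaced pair. -/
def replaceLeftmost (B : BPE σ τ) (l r n : τ) : List τ → Option (ℕ × List τ)
  | [] => none
  | [_] => none
  | t :: u :: rest =>
      if t = l ∧ u = r then some (0, n :: rest)
      else (B.replaceLeftmost l r n (u :: rest)).map
        (fun p => (p.1 + (B.dec t).length, t :: p.2))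

/-- Repeatedly replace the leftmost adjacent occurrence of `(l, r)` by `n`
until no occurrence remains (the fuel, taken to be the length of the list,
suffices since every replacement shortens the list).  Also returns the list
of byte positions at which replacements were performed, in order. -/
def runMerge (B : BPE σ τ) (l r n : τ) : ℕ → List τ → List τ × List ℕ
  | 0, T => (T, [])
  | fuel + 1, T =>
    match B.replaceLeftmost l r n T with
    | none => (T, [])
    | some (p, T') =>
      let q := B.runMerge l r n fuel T'
      (q.1, p :: q.2)

/-- Process an (indexed) list of merges in order, starting from token sequence
`T`; returns the final token sequence together with the ordered list of merge
applications performed, each recorded as a pair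
(index of the merge in the merge list, starting byte position). -/
def encodeRunAux (B : BPE σ τ) : List (ℕ × τ × τ × τ) → List τ → List τ × List (ℕ × ℕ)
  | [], T => (T, [])
  | (i, l, r, n) :: ms, T =>
    let q := B.runMerge l r n T.length T
    let q' := B.encodeRunAux ms q.1
    (q'.1, q.2.map (fun p => (i, p)) ++ q'.2)

/-- The full run of the BPE encoder on a byte string `S`: the final token
sequence together with the ordered list of merge applications performed. -/
def encodeRun (B : BPE σ τ) (S : List σ) : List τ × List (ℕ × ℕ) :=
  B.encodeRunAux (B.merges.zipIdx.map Prod.swap) (S.map B.base)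

/-- BPE encoding of a byte string. -/
def encode (B : BPE σ τ) (S : List σ) : List τ := (B.encodeRun S).1

/-- The ordered list of merge applications (merge index, starting byte
position) performed during the run of `encode` on `S`. -/
def encodeApps (B : BPE σ τ) (S : List σ) : List (ℕ × ℕ) := (B.encodeRun S).2

/-- A token sequence is *valid* if it is the canonical encoding of the byte
string it decodes to. -/
def Valid (B : BPE σ τ) (T : List τ) : Prop := B.encode (B.decodeSeq T) = T

/-- The merge list is in *normal form*:
(i) each token is produced by at most one merge;
(ii) every token `t` satisfies `encode (dec t) = [t]`;
(iii) every merge occurs later in the merge list than the merges producing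
each of its two input tokens. -/
def NormalForm (B : BPE σ τ) : Prop :=
  (∀ i j (hi : i < B.merges.length) (hj : j < B.merges.length),
      (B.merges[i]'hi).2.2 = (B.merges[j]'hj).2.2 → i = j) ∧
  (∀ t : τ, B.encode (B.dec t) = [t]) ∧
  (∀ i j (hi : i < B.merges.length) (hj : j < B.merges.length),
      (B.merges[i]'hi).2.2 = (B.merges[j]'hj).1 ∨
        (B.merges[i]'hi).2.2 = (B.merges[j]'hj).2.1 → i < j)

/-- The merge application `app = (t, p)` *crosses* byte position `c` if the
token it creates (the output of merge `t`, starting at byte position `p`)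
has a byte span properly containing `c`. -/
def AppCrosses (B : BPE σ τ) (app : ℕ × ℕ) (c : ℕ) : Prop :=
  ∃ h : app.1 < B.merges.length,
    app.2 < c ∧ c < app.2 + (B.dec (B.merges[app.1]'h).2.2).length

/-- Some merge applied during the run of `encode` on `S` crosses position `c`. -/
def MergeCrossesInRun (B : BPE σ τ) (S : List σ) (c : ℕ) : Prop :=
  ∃ app ∈ B.encodeApps S, B.AppCrosses app c

/-- The token sequence `U` contains a token whose byte span properly
contains position `c`. -/
def TokenCrosses (B : BPE σ τ) (U : List τ) (c : ℕ) : Prop :=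
  ∃ k, k < U.length ∧
    (B.decodeSeq (U.take k)).length < c ∧ c < (B.decodeSeq (U.take (k + 1))).length

end BPE
namespace BPE

variable {σ τ : Type*} [DecidableEq τ]

/-- The *Valid Covering Tree* of a byte string `P`: the set of all nonempty
token sequences `T = [t₁, …, tₙ]` such that (1) `P` is a prefix of
`decode T`, (2) `decode [t₁, …, t_{n-1}]` is a prefix of `P`, and
(3) `T` is valid. -/
def VCT (B : BPE σ τ) (P : List σ) : Set (List τ) :=
  {T | T ≠ [] ∧ P <+: B.decodeSeq T ∧ B.decodeSeq T.dropLast <+: P ∧ B.Valid T}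

/-- The maximal prefix of a token sequence whose total decoded length is at
most `k`, i.e. the tokens whose byte spans end at or before position `k`
(together with their spans, which are determined by the preceding tokens). -/
def spanPrefix (B : BPE σ τ) (k : ℕ) : List τ → List τ
  | [] => []
  | t :: T =>
      if (B.dec t).length ≤ k then t :: B.spanPrefix (k - (B.dec t).length) T
      else []

/-- `L₀` is a *lookahead bound* for the tokenizer if whenever two byte strings
agree on their first `k + L₀` bytes, the tokens of their encodings whose byte
spans end at or before position `k` coincide (with identical spans). -/
def LookaheadBound (B : BPE σ τ) (L₀ : ℕ) : Prop :=
  ∀ (x x' : List σ) (k : ℕ), x.take (k + L₀) = x'.take (k + L₀) →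
    B.spanPrefix k (B.encode x) = B.spanPrefix k (B.encode x')

/-- `U'` is the minimal covering prefix of `U` with respect to `P`: the
shortest prefix of `U` whose decoding has `P` as a prefix. -/
def IsMinCover (B : BPE σ τ) (P : List σ) (U U' : List τ) : Prop :=
  U' <+: U ∧ P <+: B.decodeSeq U' ∧
    ∀ U'' : List τ, U'' <+: U → P <+: B.decodeSeq U'' → U'.length ≤ U''.length

/-- The pair `(l, r)` occurs adjacently in `T`. -/
def PairAdj (l r : τ) (T : List τ) : Prop := ∃ A C, T = A ++ l :: r :: C

/-- The merge application `a = (t, i)` (merge index `t`, starting byte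
position `i` of the left token) is applicable to the token sequence `T`. -/
def Applicable (B : BPE σ τ) (a : ℕ × ℕ) (T : List τ) : Prop :=
  ∃ h : a.1 < B.merges.length, ∃ A C : List τ,
    T = A ++ (B.merges[a.1]'h).1 :: (B.merges[a.1]'h).2.1 :: C ∧
      (B.decodeSeq A).length = a.2

/-- `T'` is obtained from `T` by performing the merge application `a = (t, i)`:
the input pair of merge `t`, occurring adjacently in `T` with the left token
starting at byte position `i`, is replaced by the output token of merge `t`. -/
def ApplyApp (B : BPE σ τ) (a : ℕ × ℕ) (T T' : List τ) : Prop :=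
  ∃ h : a.1 < B.merges.length, ∃ A C : List τ,
    T = A ++ (B.merges[a.1]'h).1 :: (B.merges[a.1]'h).2.1 :: C ∧
      (B.decodeSeq A).length = a.2 ∧
      T' = A ++ (B.merges[a.1]'h).2.2 :: C

/-- Lexicographic order on merge applications `(t, i)`. -/
def appLE (a a' : ℕ × ℕ) : Prop :=
  a.1 < a'.1 ∨ (a.1 = a'.1 ∧ a.2 ≤ a'.2)

/-- `GreedyChain B T₀ apps T` holds when the sequence of merge applications
`apps` leads from token sequence `T₀` to token sequence `T`, and each applied
application is lexicographically least among those applicable to the current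
token sequence. -/
inductive GreedyChain (B : BPE σ τ) : List τ → List (ℕ × ℕ) → List τ → Prop
  | nil (T : List τ) : GreedyChain B T [] T
  | cons {T T' Tf : List τ} {a : ℕ × ℕ} {apps : List (ℕ × ℕ)} :
      B.ApplyApp a T T' →
      (∀ a', B.Applicable a' T → appLE a a') →
      GreedyChain B T' apps Tf →
      GreedyChain B T (a :: apps) Tf

end BPE
namespace BPE

variable {σ τ : Type*} [DecidableEq τ]

lemma decodeSeq_nil (B : BPE σ τ) : B.decodeSeq ([] : List τ) = [] := rfl

lemma decodeSeq_cons (B : BPE σ τ) (t : τ) (T : List τ) :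
    B.decodeSeq (t :: T) = B.dec t ++ B.decodeSeq T := by
  simp [decodeSeq]

lemma decodeSeq_append (B : BPE σ τ) (T U : List τ) :
    B.decodeSeq (T ++ U) = B.decodeSeq T ++ B.decodeSeq U := by
  simp [decodeSeq]

lemma decodeSeq_take_le (B : BPE σ τ) (U : List τ) (k : ℕ) :
    (B.decodeSeq (U.take k)).length ≤ (B.decodeSeq U).length := by
  conv_rhs => rw [← List.take_append_drop k U]
  rw [decodeSeq_append]
  simp

/-- No token boundary of `U` is at byte position `c`. -/
def NoB (B : BPE σ τ) (c : ℕ) (U : List τ) : Prop :=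
  ∀ k, (B.decodeSeq (U.take k)).length ≠ c

lemma take_append_cons_of_lt {α : Type*} (A C : List α) (x : α) {k : ℕ} (hk : A.length < k) :
    (A ++ x :: C).take k = A ++ x :: C.take (k - A.length - 1) := by
  rw [List.take_append, List.take_of_length_le (le_of_lt hk)]
  obtain ⟨j, hj⟩ : ∃ j, k - A.length = j + 1 := ⟨k - A.length - 1, by omega⟩
  have hj' : j = k - A.length - 1 := by omega
  rw [hj, List.take_succ_cons, hj']
  simp

lemma take_append_of_le {α : Type*} (A C : List α) {k : ℕ} (hk : k ≤ A.length) :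
    (A ++ C).take k = A.take k := by
  rw [List.take_append, Nat.sub_eq_zero_of_le hk]
  simp

/-- If a merge crossing `c` has just been applied, no boundary is at `c`. -/
lemma noB_of_cross (B : BPE σ τ) {c : ℕ} {n : τ} (A C : List τ)
    (hc1 : (B.decodeSeq A).length < c)
    (hc2 : c < (B.decodeSeq A).length + (B.dec n).length) :
    B.NoB c (A ++ n :: C) := by
  intro k
  rcases le_or_gt k A.length with hk | hk
  · rw [take_append_of_le _ _ hk]
    have := B.decodeSeq_take_le A k
    omega
  · rw [take_append_cons_of_lt _ _ _ hk, decodeSeq_append, decodeSeq_cons]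
    simp only [List.length_append]
    omega

/-- Applying a merge preserves the no-boundary-at-`c` property. -/
lemma noB_step (B : BPE σ τ) {c : ℕ} {l r n : τ}
    (hdec : B.dec n = B.dec l ++ B.dec r) (A C : List τ)
    (h : B.NoB c (A ++ l :: r :: C)) : B.NoB c (A ++ n :: C) := by
  intro k
  rcases le_or_gt k A.length with hk | hk
  · have h' := h k
    rw [take_append_of_le _ _ hk] at h' ⊢
    exact h'
  · have h' := h (k + 1)
    rw [take_append_cons_of_lt _ _ _ hk, decodeSeq_append, decodeSeq_cons, hdec]
    rw [take_append_cons_of_lt _ _ _ (by omega)] at h'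
    have e : k + 1 - A.length - 1 = (k - A.length - 1) + 1 := by omega
    rw [e, List.take_succ_cons, decodeSeq_append, decodeSeq_cons, decodeSeq_cons] at h'
    simp only [List.length_append] at h' ⊢
    omega

lemma replaceLeftmost_spec (B : BPE σ τ) (l r n : τ) :
    ∀ (T : List τ) (p : ℕ) (T' : List τ),
      B.replaceLeftmost l r n T = some (p, T') →
      ∃ A C, T = A ++ l :: r :: C ∧ T' = A ++ n :: C ∧ (B.decodeSeq A).length = p := by
  intro T
  induction T with
  | nil => intro p T' h; simp [replaceLeftmost] at h
  | cons t rest ih =>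
    intro p T' h
    match rest with
    | [] => simp [replaceLeftmost] at h
    | u :: rest' =>
      rw [replaceLeftmost] at h
      split_ifs at h with htu
      · obtain ⟨ht, hu⟩ := htu
        simp only [Option.some.injEq, Prod.mk.injEq] at h
        exact ⟨[], rest', by simp [ht, hu, ← h.1, ← h.2, decodeSeq_nil]⟩
      · rw [Option.map_eq_some_iff] at h
        obtain ⟨⟨p₀, T₀⟩, h₀, heq⟩ := h
        obtain ⟨A, C, hT, hT', hp⟩ := ih p₀ T₀ h₀
        simp only [Prod.mk.injEq] at heq
        refine ⟨t :: A, C, by simp [hT], by simp [← heq.2, hT'], ?_⟩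
        rw [decodeSeq_cons, List.length_append, hp, ← heq.1]
        omega

lemma runMerge_spec (B : BPE σ τ) (c : ℕ) {l r n : τ}
    (hdec : B.dec n = B.dec l ++ B.dec r) :
    ∀ (fuel : ℕ) (T : List τ),
      B.decodeSeq (B.runMerge l r n fuel T).1 = B.decodeSeq T ∧
      (B.NoB c T → B.NoB c (B.runMerge l r n fuel T).1) ∧
      ((∃ p ∈ (B.runMerge l r n fuel T).2, p < c ∧ c < p + (B.dec n).length) →
        B.NoB c (B.runMerge l r n fuel T).1) := by
  intro fuel
  induction fuel with
  | zero => intro T; refine ⟨rfl, fun h => h, ?_⟩; rintro ⟨p, hp, -⟩; simp [runMerge] at hp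
  | succ fuel ih =>
    intro T
    rcases hrep : B.replaceLeftmost l r n T with _ | ⟨p, T'⟩
    · rw [runMerge, hrep]
      refine ⟨rfl, fun h => h, ?_⟩
      rintro ⟨q, hq, -⟩; simp at hq
    · obtain ⟨A, C, hT, hT', hp⟩ := B.replaceLeftmost_spec l r n T p T' hrep
      have hds : B.decodeSeq T' = B.decodeSeq T := by
        rw [hT, hT', decodeSeq_append, decodeSeq_append, decodeSeq_cons, decodeSeq_cons,
          decodeSeq_cons, hdec]
        simp
      have hrw : B.runMerge l r n (fuel + 1) T =
          ((B.runMerge l r n fuel T').1, p :: (B.runMerge l r n fuel T').2) := by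
        rw [runMerge, hrep]
      obtain ⟨ih1, ih2, ih3⟩ := ih T'
      rw [hrw]
      refine ⟨by rw [ih1, hds], ?_, ?_⟩
      · intro hNB
        exact ih2 (hT' ▸ B.noB_step hdec A C (hT ▸ hNB))
      · rintro ⟨q, hq, hq1, hq2⟩
        rcases List.mem_cons.1 hq with rfl | hq
        · exact ih2 (hT' ▸ B.noB_of_cross A C (hp ▸ hq1) (hp ▸ hq2))
        · exact ih3 ⟨q, hq, hq1, hq2⟩

lemma encodeRunAux_spec (B : BPE σ τ) (c : ℕ) :
    ∀ (ms : List (ℕ × τ × τ × τ)) (T : List τ),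
      (∀ x ∈ ms, ∃ h : x.1 < B.merges.length, B.merges[x.1]'h = x.2) →
      B.decodeSeq (B.encodeRunAux ms T).1 = B.decodeSeq T ∧
      (B.NoB c T → B.NoB c (B.encodeRunAux ms T).1) ∧
      ((∃ app ∈ (B.encodeRunAux ms T).2, B.AppCrosses app c) →
        B.NoB c (B.encodeRunAux ms T).1) := by
  intro ms
  induction ms with
  | nil =>
    intro T _
    refine ⟨rfl, fun h => h, ?_⟩
    rintro ⟨app, happ, -⟩; simp [encodeRunAux] at happ
  | cons m ms ih =>
    obtain ⟨i, l, r, n⟩ := m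
    intro T hms
    obtain ⟨hi, hm⟩ := hms (i, l, r, n) List.mem_cons_self
    have hmem : B.merges[i]'hi ∈ B.merges := List.getElem_mem _
    have hdec : B.dec n = B.dec l ++ B.dec r := by
      have := B.dec_merge _ hmem
      rw [hm] at this
      exact this
    obtain ⟨r1, r2, r3⟩ := B.runMerge_spec c hdec T.length T
    obtain ⟨ih1, ih2, ih3⟩ := ih (B.runMerge l r n T.length T).1
      (fun x hx => hms x (List.mem_cons_of_mem _ hx))
    have hrw : B.encodeRunAux ((i, l, r, n) :: ms) T =
        ((B.encodeRunAux ms (B.runMerge l r n T.length T).1).1,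
          (B.runMerge l r n T.length T).2.map (fun p => (i, p)) ++
            (B.encodeRunAux ms (B.runMerge l r n T.length T).1).2) := rfl
    rw [hrw]
    refine ⟨by rw [ih1, r1], fun h => ih2 (r2 h), ?_⟩
    rintro ⟨app, happ, hcross⟩
    rcases List.mem_append.1 happ with happ | happ
    · obtain ⟨p, hp, heq⟩ := List.mem_map.1 happ
      subst heq
      obtain ⟨hlt, hc1, hc2⟩ := hcross
      have e : B.merges[(i, p).1]'hlt = (l, r, n) := hm
      rw [e] at hc2
      exact ih2 (r3 ⟨p, hp, hc1, hc2⟩)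
    · exact ih3 ⟨app, happ, hcross⟩

lemma mem_enum_spec {α : Type*} (L : List α) (x : ℕ × α) (hx : x ∈ L.zipIdx.map Prod.swap) :
    ∃ h : x.1 < L.length, L[x.1]'h = x.2 := by
  obtain ⟨j, hj, hget⟩ := List.mem_iff_getElem.1 hx
  have hjlen : j < L.length := by simpa using hj
  simp only [List.getElem_map, List.getElem_zipIdx, Prod.swap, zero_add] at hget
  subst hget
  exact ⟨hjlen, rfl⟩

lemma decodeSeq_map_base (B : BPE σ τ) (S : List σ) :
    B.decodeSeq (S.map B.base) = S := by
  induction S with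
  | nil => rfl
  | cons b S ih => rw [List.map_cons, decodeSeq_cons, B.dec_base, ih]; rfl

lemma decodeSeq_encode_s3 (B : BPE σ τ) (S : List σ) :
    B.decodeSeq (B.encode S) = S := by
  have := (B.encodeRunAux_spec 0 (B.merges.zipIdx.map Prod.swap) (S.map B.base)
    (fun x hx => mem_enum_spec _ _ hx)).1
  rw [encode, encodeRun, this, decodeSeq_map_base]

lemma tokenCrosses_of_noB (B : BPE σ τ) :
    ∀ (U : List τ) (c : ℕ), B.NoB c U → c < (B.decodeSeq U).length →
      B.TokenCrosses U c := by
  intro U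
  induction U with
  | nil => intro c _ hlt; simp [decodeSeq_nil] at hlt
  | cons t U ih =>
    intro c hNB hlt
    have h0 : 0 < c := by
      have := hNB 0
      simp [decodeSeq_nil] at this
      omega
    have h1 : (B.dec t).length ≠ c := by
      have := hNB 1
      rwa [List.take_succ_cons, List.take_zero, decodeSeq_cons, decodeSeq_nil,
        List.append_nil] at this
    rcases lt_or_gt_of_ne h1 with hlt1 | hgt1
    · -- c > |dec t| : recurse
      have hNB' : B.NoB (c - (B.dec t).length) U := by
        intro k
        have := hNB (k + 1)
        rw [List.take_succ_cons, decodeSeq_cons, List.length_append] at this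
        omega
      have hlt' : c - (B.dec t).length < (B.decodeSeq U).length := by
        rw [decodeSeq_cons, List.length_append] at hlt
        omega
      obtain ⟨k, hk, hk1, hk2⟩ := ih _ hNB' hlt'
      refine ⟨k + 1, by simpa using hk, ?_, ?_⟩
      · rw [List.take_succ_cons, decodeSeq_cons, List.length_append]
        omega
      · rw [List.take_succ_cons, decodeSeq_cons, List.length_append]
        omega
    · -- c < |dec t| : token 0 crosses
      refine ⟨0, by simp, ?_, ?_⟩
      · simpa [decodeSeq_nil] using h0
      · rw [List.take_succ_cons, List.take_zero, decodeSeq_cons, decodeSeq_nil,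
          List.append_nil]
        omega

end BPE

/-- If some merge applied during the run of `encode` on `S₁ ++ S₂` crosses
position `|S₁|`, then the final token sequence `encode (S₁ ++ S₂)` contains a
token crossing position `|S₁|`; in particular,
`encode (S₁ ++ S₂) ≠ encode S₁ ++ encode S₂`. -/
theorem BPE.token_crosses_of_crossing_merge {σ τ : Type*} [DecidableEq τ]
    (B : BPE σ τ) (hNF : B.NormalForm) (S₁ S₂ : List σ)
    (h : B.MergeCrossesInRun (S₁ ++ S₂) S₁.length) :
    B.TokenCrosses (B.encode (S₁ ++ S₂)) S₁.length ∧
      B.encode (S₁ ++ S₂) ≠ B.encode S₁ ++ B.encode S₂ := by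
  obtain ⟨app, happ, hcross⟩ := h
  have hNB : B.NoB S₁.length (B.encode (S₁ ++ S₂)) :=
    (B.encodeRunAux_spec S₁.length (B.merges.zipIdx.map Prod.swap) ((S₁ ++ S₂).map B.base)
      (fun x hx => BPE.mem_enum_spec _ _ hx)).2.2 ⟨app, happ, hcross⟩
  have htot : (B.decodeSeq (B.encode (S₁ ++ S₂))).length = S₁.length + S₂.length := by
    rw [B.decodeSeq_encode_s3]; simp
  have hne : S₁.length + S₂.length ≠ S₁.length := by
    have := hNB (B.encode (S₁ ++ S₂)).length
    rwa [List.take_length, htot] at this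
  have hlt : S₁.length < (B.decodeSeq (B.encode (S₁ ++ S₂))).length := by
    rw [htot]; omega
  refine ⟨B.tokenCrosses_of_noB _ S₁.length hNB hlt, ?_⟩
  intro heq
  have := hNB (B.encode S₁).length
  rw [heq, List.take_left, B.decodeSeq_encode_s3] at this
  exact this rfl
end

section
/- For every byte string S, decode(encode(S)) = S; consequently, encode(S) is a valid token sequence, i.e. encode(decode(encode(S))) = encode(S). -/
namespace BPE

variable {σ τ : Type*} [DecidableEq τ]

lemma decodeSeq_replaceLeftmost (B : BPE σ τ) {l r n : τ}
    (hd : B.dec n = B.dec l ++ B.dec r) :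
    ∀ (T : List τ) (p : ℕ) (T' : List τ),
      B.replaceLeftmost l r n T = some (p, T') →
      B.decodeSeq T' = B.decodeSeq T
  | [], _, _, h => by simp [replaceLeftmost] at h
  | [_], _, _, h => by simp [replaceLeftmost] at h
  | t :: u :: rest, p, T', h => by
    rw [replaceLeftmost] at h
    split_ifs at h with hc
    · obtain ⟨rfl, rfl⟩ := hc
      simp only [Option.some.injEq, Prod.mk.injEq] at h
      rw [← h.2]
      simp [decodeSeq, hd]
    · simp only [Option.map_eq_some_iff] at h
      obtain ⟨⟨p0, T0⟩, h1, h2⟩ := h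
      have := decodeSeq_replaceLeftmost B hd (u :: rest) p0 T0 h1
      simp only [Prod.mk.injEq] at h2
      rw [← h2.2]
      simp only [decodeSeq, List.map_cons, List.flatten_cons] at this ⊢
      rw [this]

lemma decodeSeq_runMerge (B : BPE σ τ) {l r n : τ}
    (hd : B.dec n = B.dec l ++ B.dec r) :
    ∀ (fuel : ℕ) (T : List τ),
      B.decodeSeq (B.runMerge l r n fuel T).1 = B.decodeSeq T
  | 0, _ => rfl
  | fuel + 1, T => by
    rw [runMerge]
    rcases h : B.replaceLeftmost l r n T with _ | ⟨p, T'⟩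
    · rfl
    · simp only
      rw [decodeSeq_runMerge B hd fuel T',
        B.decodeSeq_replaceLeftmost hd T p T' h]

lemma decodeSeq_encodeRunAux (B : BPE σ τ) :
    ∀ (ms : List (ℕ × τ × τ × τ)),
      (∀ m ∈ ms, B.dec m.2.2.2 = B.dec m.2.1 ++ B.dec m.2.2.1) →
      ∀ T : List τ, B.decodeSeq (B.encodeRunAux ms T).1 = B.decodeSeq T
  | [], _, _ => rfl
  | (i, l, r, n) :: ms, h, T => by
    rw [encodeRunAux]
    simp only
    rw [decodeSeq_encodeRunAux B ms (fun m hm => h m (List.mem_cons_of_mem _ hm)),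
      B.decodeSeq_runMerge (h (i, l, r, n) List.mem_cons_self) T.length T]

end BPE

/-- For every byte string `S`, `decode (encode S) = S`; consequently,
`encode S` is a valid token sequence, i.e.
`encode (decode (encode S)) = encode S`. -/
theorem BPE.decodeSeq_encode {σ τ : Type*} [DecidableEq τ]
    (B : BPE σ τ) (hNF : B.NormalForm) (S : List σ) :
    B.decodeSeq (B.encode S) = S ∧
      B.encode (B.decodeSeq (B.encode S)) = B.encode S := by
  have h1 : B.decodeSeq (B.encode S) = S := by
    have := B.decodeSeq_encodeRunAux (B.merges.zipIdx.map Prod.swap)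
      (fun m hm => by
        have hmem : m.2 ∈ B.merges := by
          obtain ⟨x, hx, rfl⟩ := List.mem_map.mp hm
          exact List.fst_mem_of_mem_zipIdx hx
        exact B.dec_merge m.2 hmem) (S.map B.base)
    rw [encode, encodeRun, this]
    simp only [decodeSeq, List.map_map, Function.comp_def, B.dec_base]
    clear this
    induction S with
    | nil => rfl
    | cons a S ih => simpa using ih
  exact ⟨h1, by rw [h1]⟩
end
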